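/- Let A be an Arens regular Banach algebra, X a Banach A-bimodule, and D : A → X* a surjective derivation. Then the double adjoint D'' : A** → X*** is a derivation (with respect to the first Arens product and the canonical A**-bimodule structure on X***) if and only if for every x'' in X**, the map F ↦ x''·F from A** to X** is weak*-to-weak continuous. -/

import Mathlib

open NormedSpace ContinuousLinearMap Filter
open Topology

noncomputable section

namespace NormedSpace

/-- The topological dual of a seminormed space `E` (as `NormedSpace.Dual` was defined in the
older Mathlib: a `def` equal to `E →L[𝕜] 𝕜`, carrying the operator-norm instances). -/
def Dual (𝕜 : Type*) [NontriviallyNormedField 𝕜] (E : Type*) [SeminormedAddCommGroup E]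
    [NormedSpace 𝕜 E] : Type _ :=
  E →L[𝕜] 𝕜

instance (𝕜 : Type*) [NontriviallyNormedField 𝕜] (E : Type*) [NormedAddCommGroup E]
    [NormedSpace 𝕜 E] : NormedAddCommGroup (Dual 𝕜 E) :=
  ContinuousLinearMap.toNormedAddCommGroup

instance (𝕜 : Type*) [NontriviallyNormedField 𝕜] (E : Type*) [NormedAddCommGroup E]
    [NormedSpace 𝕜 E] : NormedSpace 𝕜 (Dual 𝕜 E) :=
  ContinuousLinearMap.toNormedSpace

instance (𝕜 : Type*) [NontriviallyNormedField 𝕜] (E : Type*) [NormedAddCommGroup E]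
    [NormedSpace 𝕜 E] : FunLike (Dual 𝕜 E) E 𝕜 :=
  ContinuousLinearMap.funLike

instance (𝕜 : Type*) [NontriviallyNormedField 𝕜] (E : Type*) [NormedAddCommGroup E]
    [NormedSpace 𝕜 E] : ContinuousLinearMapClass (Dual 𝕜 E) 𝕜 E 𝕜 :=
  ContinuousLinearMap.continuousSemilinearMapClass

instance (𝕜 : Type*) [NontriviallyNormedField 𝕜] (E : Type*) [NormedAddCommGroup E]
    [NormedSpace 𝕜 E] : Inhabited (Dual 𝕜 E) :=
  ⟨0⟩

instance (𝕜 : Type*) [NontriviallyNormedField 𝕜] (E : Type*) [NormedAddCommGroup E]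
    [NormedSpace 𝕜 E] [CompleteSpace 𝕜] : CompleteSpace (Dual 𝕜 E) :=
  inferInstanceAs (CompleteSpace (E →L[𝕜] 𝕜))

end NormedSpace

/-- The adjoint (dual map) of a continuous linear map: `dMap T φ = φ ∘ T`. -/
def dMap {E F : Type*} [NormedAddCommGroup E] [NormedSpace ℝ E]
    [NormedAddCommGroup F] [NormedSpace ℝ F] (T : E →L[ℝ] F) :
    Dual ℝ F →L[ℝ] Dual ℝ E :=
  (ContinuousLinearMap.compL ℝ E F ℝ).flip T

/-- The double adjoint of a continuous linear map. -/
def ddMap {E F : Type*} [NormedAddCommGroup E] [NormedSpace ℝ E]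
    [NormedAddCommGroup F] [NormedSpace ℝ F] (T : E →L[ℝ] F) :
    Dual ℝ (Dual ℝ E) →L[ℝ] Dual ℝ (Dual ℝ F) :=
  dMap (dMap T)

/-- The (first, left) Arens extension of a bounded bilinear map `m : E × F → G` to the
biduals, via the classical three steps:
`⟨g'·e, f⟩ = ⟨g', m e f⟩`, `⟨Ψ·g', e⟩ = ⟨Ψ, g'·e⟩`, `⟨arensExt m Φ Ψ, g'⟩ = ⟨Φ, Ψ·g'⟩`. -/
def arensExt {E F G : Type*} [NormedAddCommGroup E] [NormedSpace ℝ E]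
    [NormedAddCommGroup F] [NormedSpace ℝ F] [NormedAddCommGroup G] [NormedSpace ℝ G]
    (m : E →L[ℝ] F →L[ℝ] G) :
    Dual ℝ (Dual ℝ E) →L[ℝ] Dual ℝ (Dual ℝ F) →L[ℝ] Dual ℝ (Dual ℝ G) :=
  let s1 : E →L[ℝ] (Dual ℝ G →L[ℝ] Dual ℝ F) :=
    ((ContinuousLinearMap.compL ℝ F G ℝ).flip).comp m
  let s2 : Dual ℝ G →L[ℝ] (Dual ℝ (Dual ℝ F) →L[ℝ] Dual ℝ E) :=
    ((ContinuousLinearMap.compL ℝ E (Dual ℝ F) ℝ).flip).comp s1.flip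
  (((ContinuousLinearMap.compL ℝ (Dual ℝ G) (Dual ℝ E) ℝ).flip).comp s2.flip).flip

/-- The first Arens product on the bidual of a (possibly non-unital) Banach algebra:
`⟨F G, a'⟩ = ⟨F, G·a'⟩` where `⟨G·a', a⟩ = ⟨G, a'·a⟩` and `⟨a'·a, b⟩ = ⟨a', a*b⟩`. -/
def arens1 (A : Type*) [NonUnitalNormedRing A] [NormedSpace ℝ A]
    [IsScalarTower ℝ A A] [SMulCommClass ℝ A A] :
    Dual ℝ (Dual ℝ A) →L[ℝ] Dual ℝ (Dual ℝ A) →L[ℝ] Dual ℝ (Dual ℝ A) :=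
  arensExt (ContinuousLinearMap.mul ℝ A)

/-- The second Arens product on the bidual of a (possibly non-unital) Banach algebra:
`⟨F ∘ G, a'⟩ = ⟨G, a'∘F⟩` where `⟨a'∘F, a⟩ = ⟨F, a∘a'⟩` and `⟨a∘a', b⟩ = ⟨a', b*a⟩`. -/
def arens2 (A : Type*) [NonUnitalNormedRing A] [NormedSpace ℝ A]
    [IsScalarTower ℝ A A] [SMulCommClass ℝ A A] :
    Dual ℝ (Dual ℝ A) →L[ℝ] Dual ℝ (Dual ℝ A) →L[ℝ] Dual ℝ (Dual ℝ A) :=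
  (arensExt ((ContinuousLinearMap.mul ℝ A).flip)).flip

/-- `f`, a map from a dual space to a normed space, is weak-star-to-weak continuous. -/
def WstarToWeakContinuous {E F : Type*} [NormedAddCommGroup E] [NormedSpace ℝ E]
    [NormedAddCommGroup F] [NormedSpace ℝ F]
    (f : Dual ℝ E → F) : Prop :=
  Continuous fun x : WeakDual ℝ E => toWeakSpace ℝ F (f x)
variable {A : Type*} [NonUnitalNormedRing A] [NormedSpace ℝ A]
  [IsScalarTower ℝ A A] [SMulCommClass ℝ A A] [CompleteSpace A]
variable {X : Type*} [NormedAddCommGroup X] [NormedSpace ℝ X] [CompleteSpace X]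


section helpers
variable {E F G : Type*} [NormedAddCommGroup E] [NormedSpace ℝ E]
    [NormedAddCommGroup F] [NormedSpace ℝ F] [NormedAddCommGroup G] [NormedSpace ℝ G]

def step1 (m : E →L[ℝ] F →L[ℝ] G) (g' : Dual ℝ G) : E →L[ℝ] Dual ℝ F :=
  ((((ContinuousLinearMap.compL ℝ F G ℝ).flip).comp m).flip) g'

end helpers

instance dualIsAddApply (E : Type*) [NormedAddCommGroup E] [NormedSpace ℝ E] :
    IsAddApply (Dual ℝ E) E ℝ :=
  ⟨fun _ _ _ => rfl⟩

lemma weakdual_continuous_exists_eval {E : Type*} [NormedAddCommGroup E] [NormedSpace ℝ E]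
    (Λ : Dual ℝ E →L[ℝ] ℝ) (h : Continuous fun φ : WeakDual ℝ E => Λ φ) :
    ∃ e : E, ∀ φ : Dual ℝ E, Λ φ = φ e := by
  classical
  set B := topDualPairing ℝ E with hB
  -- preimage of unit ball is a neighborhood of 0 in the weak-* topology
  have h0 : (fun φ : WeakDual ℝ E => Λ φ) 0 = 0 := map_zero Λ
  have hnb : (fun φ : WeakDual ℝ E => Λ φ) ⁻¹' Metric.ball (0 : ℝ) 1 ∈ 𝓝 (0 : WeakDual ℝ E) :=
    (h.tendsto' 0 0 (map_zero Λ)) (Metric.ball_mem_nhds 0 one_pos)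
  obtain ⟨U, hU, hUsub⟩ := (LinearMap.hasBasis_weakBilin B).mem_iff.1 hnb
  obtain ⟨s, r, hr, rfl⟩ := (SeminormFamily.basisSets_iff _).1 hU
  -- kernel containment
  have hker : (⨅ y : s, LinearMap.ker (B.flip (y : E))) ≤ LinearMap.ker (Λ : Dual ℝ E →ₗ[ℝ] ℝ) := by
    intro φ hφ
    simp only [Submodule.mem_iInf, LinearMap.mem_ker] at hφ ⊢
    have hmem : ∀ t : ℝ, (t • φ : WeakDual ℝ E) ∈ (Finset.sup s (LinearMap.toSeminormFamily B)).ball 0 r := by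
      intro t
      rw [Seminorm.mem_ball_zero]
      refine Seminorm.finset_sup_apply_lt hr fun y hy => ?_
      have hz : φ y = 0 := hφ ⟨y, hy⟩
      have h2 : (LinearMap.toSeminormFamily B y) ((t • φ : Dual ℝ E) : WeakDual ℝ E) = 0 := by
        simp [LinearMap.toSeminormFamily_apply, hB, topDualPairing_apply, hz]
      rw [h2]; exact hr
    have habs : ∀ t : ℝ, |t| * |Λ φ| < 1 := by
      intro t
      have := hUsub (hmem t)
      change Λ (t • φ) ∈ Metric.ball (0:ℝ) 1 at this
      rw [show Λ (t • φ) = t * Λ φ from map_smul Λ t φ] at this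
      simpa [Real.dist_eq, abs_mul] using this
    by_contra hne
    have h1 : 0 < |Λ φ| := abs_pos.mpr hne
    have := habs (2 / |Λ φ|)
    rw [abs_of_pos (by positivity)] at this
    rw [div_mul_cancel₀ 2 (ne_of_gt h1)] at this
    norm_num at this
  have hspan := mem_span_of_iInf_ker_le_ker (𝕜 := ℝ)
      (L := fun y : s => B.flip (y : E)) (K := (Λ : Dual ℝ E →ₗ[ℝ] ℝ)) hker
  obtain ⟨c, hc⟩ := (Submodule.mem_span_range_iff_exists_fun ℝ).1 hspan
  refine ⟨∑ y : s, c y • (y : E), fun φ => ?_⟩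
  have := LinearMap.congr_fun hc φ
  simp only [LinearMap.coe_sum, Finset.sum_apply, LinearMap.smul_apply, smul_eq_mul] at this
  refine (show Λ φ = (Λ : Dual ℝ E →ₗ[ℝ] ℝ) φ from rfl).trans ?_
  refine this.symm.trans ?_
  rw [map_sum]
  refine (Finset.sum_apply _ _ _).trans ?_
  refine Finset.sum_congr rfl fun y _ => ?_
  rw [map_smul]
  simp [hB, topDualPairing_apply, smul_eq_mul]
  rfl

lemma ddMap_surjective {E F : Type*} [NormedAddCommGroup E] [NormedSpace ℝ E] [CompleteSpace E]
    [NormedAddCommGroup F] [NormedSpace ℝ F]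
    (T : E →L[ℝ] Dual ℝ F) (hs : Function.Surjective T) : Function.Surjective (ddMap T) := by
  obtain ⟨C, Cpos, hC⟩ := T.exists_preimage_norm_le hs
  set Td := dMap T with hTd
  have hb : ∀ x'' : Dual ℝ (Dual ℝ F), ‖x''‖ ≤ C * ‖Td x''‖ := by
    intro x''
    refine x''.opNorm_le_bound (by positivity) fun ψ => ?_
    obtain ⟨a, ha, hna⟩ := hC ψ
    have h1 : x'' ψ = Td x'' a := by rw [← ha]; rfl
    calc ‖x'' ψ‖ = ‖Td x'' a‖ := by rw [h1]
      _ ≤ ‖Td x''‖ * ‖a‖ := (Td x'').le_opNorm a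
      _ ≤ ‖Td x''‖ * (C * ‖ψ‖) := by
          exact mul_le_mul_of_nonneg_left hna (norm_nonneg _)
      _ = C * ‖Td x''‖ * ‖ψ‖ := by ring
  have hinj : Function.Injective Td.toLinearMap := by
    intro x y hxy
    have hz : Td (x - y) = 0 := by
      rw [map_sub]; rw [show Td.toLinearMap x = Td x from rfl, show Td.toLinearMap y = Td y from rfl] at hxy
      rw [hxy, sub_self]
    have := hb (x - y)
    rw [hz, norm_zero, mul_zero] at this
    exact sub_eq_zero.1 (norm_le_zero_iff.1 this)
  intro φ
  set p : Subspace ℝ (Dual ℝ E) := LinearMap.range Td.toLinearMap with hp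
  let eq := LinearEquiv.ofInjective Td.toLinearMap hinj
  let g₀ : p →ₗ[ℝ] ℝ := (φ.toLinearMap).comp eq.symm.toLinearMap
  have hbound : ∀ y : p, ‖g₀ y‖ ≤ (‖φ‖ * C) * ‖y‖ := by
    intro y
    have hy : (y : Dual ℝ E) = Td (eq.symm y) := by
      conv_lhs => rw [← eq.apply_symm_apply y]
      exact LinearEquiv.ofInjective_apply Td.toLinearMap _
    calc ‖g₀ y‖ = ‖φ (eq.symm y)‖ := rfl
      _ ≤ ‖φ‖ * ‖(eq.symm y : Dual ℝ (Dual ℝ F))‖ := φ.le_opNorm _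
      _ ≤ ‖φ‖ * (C * ‖Td (eq.symm y)‖) := by
          exact mul_le_mul_of_nonneg_left (hb _) (norm_nonneg _)
      _ = (‖φ‖ * C) * ‖(y : Dual ℝ E)‖ := by rw [← hy]; ring
      _ = (‖φ‖ * C) * ‖y‖ := rfl
  let g : p →L[ℝ] ℝ := g₀.mkContinuous (‖φ‖ * C) hbound
  obtain ⟨Ψ, hext, -⟩ := exists_extension_norm_eq p g
  refine ⟨Ψ, ?_⟩
  refine DFunLike.ext _ _ fun x'' => ?_
  have hmem : Td x'' ∈ p := ⟨x'', rfl⟩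
  have h1 : ddMap T Ψ x'' = Ψ (Td x'') := rfl
  have h2 := hext ⟨Td x'', hmem⟩
  have h3 : eq.symm ⟨Td x'', hmem⟩ = x'' := by
    apply hinj
    have := eq.apply_symm_apply ⟨Td x'', hmem⟩
    have h4 : (eq (eq.symm ⟨Td x'', hmem⟩) : Dual ℝ E) = Td x'' := by rw [this]
    rw [LinearEquiv.ofInjective_apply] at h4
    exact h4
  rw [h1, h2]
  show g₀ ⟨Td x'', hmem⟩ = φ x''
  show φ (eq.symm ⟨Td x'', hmem⟩) = φ x''
  rw [h3]


def aQ (r : A →L[ℝ] X →L[ℝ] X) (x'' : Dual ℝ (Dual ℝ X))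
    (Θ : Dual ℝ (Dual ℝ (Dual ℝ X))) : Dual ℝ A :=
  Θ.comp ((arensExt r.flip x'').comp (inclusionInDoubleDual ℝ A))


set_option maxHeartbeats 2000000

/-- For an Arens regular Banach algebra `A` and a surjective derivation `D : A → X*`, the
double adjoint `D'' : A** → X***` is a derivation if and only if for every `x'' ∈ X**`
the map `F ↦ x''·F` is weak-star-to-weak continuous. -/
theorem bidual_derivation_iff_wstarw
    -- `l` is the left action, `r a x = x · a` is the right action of the bimodule `X`
    (l r : A →L[ℝ] X →L[ℝ] X)
    (hl : ∀ a b : A, l (a * b) = (l a).comp (l b))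
    (hr : ∀ a b : A, r (a * b) = (r b).comp (r a))
    (hc : ∀ a b : A, (l a).comp (r b) = (r b).comp (l a))
    (hreg : ∀ F G : Dual ℝ (Dual ℝ A), arens1 A F G = arens2 A F G)
    (D : A →L[ℝ] Dual ℝ X)
    (hD : ∀ a b : A, D (a * b) = dMap (r a) (D b) + dMap (l b) (D a))
    (hsurj : Function.Surjective D) :
    (∀ F G : Dual ℝ (Dual ℝ A),
      ddMap D (arens1 A F G) =
        dMap ((arensExt r.flip).flip F) (ddMap D G) + dMap (arensExt l G) (ddMap D F)) ↔
    (∀ x'' : Dual ℝ (Dual ℝ X),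
      WstarToWeakContinuous fun F : Dual ℝ (Dual ℝ A) => arensExt r.flip x'' F) := by
  classical
  have key : ∀ (F G : Dual ℝ (Dual ℝ A)) (x'' : Dual ℝ (Dual ℝ X)),
      ddMap D (arens1 A F G) x''
        = F (aQ r x'' (ddMap D G) + dMap D (arensExt l G x'')) := by
    intro F G x''
    have h1 : ddMap D (arens1 A F G) x''
        = F (G.comp (step1 (ContinuousLinearMap.mul ℝ A) (dMap D x''))) := rfl
    rw [h1]
    congr 1
    refine DFunLike.ext _ _ fun a => ?_
    have h2 : (aQ r x'' (ddMap D G) + dMap D (arensExt l G x'')) a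
        = G ((arensExt r.flip x'' (inclusionInDoubleDual ℝ A a)).comp D
            + x''.comp (step1 l (D a))) := by
      rw [ContinuousLinearMap.add_apply]
      refine Eq.trans ?_ (map_add G _ _).symm
      rfl
    rw [h2]
    show G (step1 (ContinuousLinearMap.mul ℝ A) (dMap D x'') a) = _
    congr 1
    refine DFunLike.ext _ _ fun b => ?_
    show x'' (D (a * b)) = _
    rw [hD a b, map_add]
    rfl
  have hQ : (∀ F G : Dual ℝ (Dual ℝ A),
      ddMap D (arens1 A F G) =
        dMap ((arensExt r.flip).flip F) (ddMap D G) + dMap (arensExt l G) (ddMap D F)) ↔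
      (∀ (F G : Dual ℝ (Dual ℝ A)) (x'' : Dual ℝ (Dual ℝ X)),
        ddMap D G (arensExt r.flip x'' F) = F (aQ r x'' (ddMap D G))) := by
    constructor
    · intro hder F G x''
      have h' := DFunLike.ext_iff.1 (hder F G) x''
      rw [key F G x''] at h'
      rw [map_add] at h'
      have r1 : dMap ((arensExt r.flip).flip F) (ddMap D G) x''
          = ddMap D G (arensExt r.flip x'' F) := rfl
      have r2 : dMap (arensExt l G) (ddMap D F) x''
          = F (dMap D (arensExt l G x'')) := rfl
      rw [ContinuousLinearMap.add_apply, r1, r2] at h'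
      linarith
    · intro hq F G
      refine DFunLike.ext _ _ fun x'' => ?_
      rw [key F G x'', map_add, ContinuousLinearMap.add_apply]
      have r1 : dMap ((arensExt r.flip).flip F) (ddMap D G) x''
          = ddMap D G (arensExt r.flip x'' F) := rfl
      have r2 : dMap (arensExt l G) (ddMap D F) x''
          = F (dMap D (arensExt l G x'')) := rfl
      rw [r1, r2, hq F G x'']
  rw [hQ]
  constructor
  · intro hq x''
    unfold WstarToWeakContinuous
    apply WeakBilin.continuous_of_continuous_eval
    intro Θ
    obtain ⟨G, hG⟩ := ddMap_surjective D hsurj Θ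
    have heq : (fun F : WeakDual ℝ (Dual ℝ A) =>
        ((topDualPairing ℝ (Dual ℝ (Dual ℝ X))).flip)
          (toWeakSpace ℝ (Dual ℝ (Dual ℝ X)) (arensExt r.flip x'' F)) Θ)
        = fun F : WeakDual ℝ (Dual ℝ A) => F (aQ r x'' Θ) := by
      funext F
      show Θ (arensExt r.flip x'' F) = F (aQ r x'' Θ)
      rw [← hG]
      exact hq F G x''
    rw [heq]
    exact WeakDual.eval_continuous _
  · intro hw F G x''
    have hc : Continuous fun φ : WeakDual ℝ (Dual ℝ A) =>
        ((ddMap D G).comp (arensExt r.flip x'')) φ := by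
      have h1 := hw x''
      unfold WstarToWeakContinuous at h1
      have h2 : Continuous fun v : WeakSpace ℝ (Dual ℝ (Dual ℝ X)) =>
          ((topDualPairing ℝ (Dual ℝ (Dual ℝ X))).flip) v (ddMap D G) :=
        WeakBilin.eval_continuous _ _
      exact h2.comp h1
    obtain ⟨a', ha'⟩ := weakdual_continuous_exists_eval ((ddMap D G).comp (arensExt r.flip x'')) hc
    have haq : aQ r x'' (ddMap D G) = a' := by
      refine DFunLike.ext _ _ fun a => ?_
      have := ha' (inclusionInDoubleDual ℝ A a)
      change ddMap D G (arensExt r.flip x'' (inclusionInDoubleDual ℝ A a)) = _ at this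
      show ddMap D G (arensExt r.flip x'' (inclusionInDoubleDual ℝ A a)) = a' a
      rw [this]
      exact dual_def ℝ A a a'
    rw [haq]
    have := ha' F
    change ddMap D G (arensExt r.flip x'' F) = _ at this
    exact this
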